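/- Knabe bound on connected graphs: Let G = (V, E) be a finite connected graph and let H = Σ_{(i,j)∈E} h_{i,j} be a self-adjoint operator on a finite-dimensional Hilbert space, where each h_{i,j} is an orthogonal projector. Suppose that for each vertex v, the subsystem operator A_v := (Σ_{j : (v,j)∈E} h_{v,j})² satisfies A_v ≥ Δ_v · Σ_{j : (v,j)∈E} h_{v,j} for some real Δ_v ≥ 0. Then H² ≥ 2(min_{v∈V} Δ_v − 1/2) H, and consequently the spectral gap of H is at least 2(min_v Δ_v − 1/2). -/

import Mathlib

open ComplexOrder Matrix Finset

section KnabeAux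

private lemma knabe_psd_of_proj {n : ℕ} {A : Matrix (Fin n) (Fin n) ℂ}
    (h1 : A.IsHermitian) (h2 : A * A = A) : A.PosSemidef := by
  have := Matrix.posSemidef_conjTranspose_mul_self A
  rwa [h1, h2] at this

private lemma knabe_smul_psd {n : ℕ} {A : Matrix (Fin n) (Fin n) ℂ}
    (hA : A.PosSemidef) {c : ℝ} (hc : 0 ≤ c) : ((c : ℂ) • A).PosSemidef := by
  refine posSemidef_iff_dotProduct_mulVec.mpr ⟨?_, fun x => ?_⟩
  · unfold Matrix.IsHermitian
    rw [conjTranspose_smul, hA.1]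
    norm_num
  · rw [smul_mulVec, dotProduct_smul, smul_eq_mul]
    exact mul_nonneg (Complex.zero_le_real.2 hc) (hA.dotProduct_mulVec_nonneg x)

private lemma knabe_sum_psd {n : ℕ} {ι : Type*} (s : Finset ι)
    (f : ι → Matrix (Fin n) (Fin n) ℂ) (hf : ∀ i ∈ s, (f i).PosSemidef) :
    (∑ i ∈ s, f i).PosSemidef := by
  classical
  induction s using Finset.induction with
  | empty => simpa using Matrix.PosSemidef.zero
  | insert _ _ hnm ih =>
    rw [Finset.sum_insert hnm]
    exact ((hf _ (Finset.mem_insert_self _ _)).add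
      (ih fun i hi => hf i (Finset.mem_insert_of_mem hi)))

variable {V : Type} [Fintype V] [DecidableEq V] (G : SimpleGraph V) [DecidableRel G.Adj]

private lemma knabe_pair_sum {M : Type*} [AddCommMonoid M] (F : Sym2 V → M) :
    ∑ v : V, ∑ u ∈ G.neighborFinset v, F s(v, u) = ∑ e ∈ G.edgeFinset, (F e + F e) := by
  classical
  have h1 : ∑ v : V, ∑ u ∈ G.neighborFinset v, F s(v, u)
      = ∑ p ∈ Finset.univ.filter (fun p : V × V => G.Adj p.1 p.2), F s(p.1, p.2) := by
    rw [Finset.sum_finset_product (Finset.univ.filter (fun p : V × V => G.Adj p.1 p.2))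
      Finset.univ (fun v => G.neighborFinset v) (by simp)]
  rw [h1, ← Finset.sum_fiberwise_of_maps_to
    (g := fun p : V × V => s(p.1, p.2)) (t := G.edgeFinset)
    (fun p hp => by simp only [Finset.mem_filter] at hp; simpa using hp.2)]
  refine Finset.sum_congr rfl fun e he => ?_
  induction e with
  | _ x y =>
    have hadj : G.Adj x y := by simpa using he
    have hfib : (Finset.univ.filter (fun p : V × V => G.Adj p.1 p.2)).filter
        (fun p => s(p.1, p.2) = s(x, y)) = {(x, y), (y, x)} := by
      ext p
      obtain ⟨a, b⟩ := p
      simp only [Finset.mem_filter, Finset.mem_univ, true_and, Finset.mem_insert,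
        Finset.mem_singleton, Prod.mk.injEq, Sym2.eq_iff]
      constructor
      · rintro ⟨_, (⟨rfl, rfl⟩ | ⟨rfl, rfl⟩)⟩ <;> simp
      · rintro (⟨rfl, rfl⟩ | ⟨rfl, rfl⟩) <;> simp [hadj, hadj.symm]
    rw [hfib]
    have hne : (x, y) ≠ (y, x) := by
      intro hxy
      exact (G.ne_of_adj hadj) (congrArg Prod.fst hxy)
    rw [Finset.sum_pair hne]
    simp [Sym2.eq_swap]

private lemma knabe_triple_sum {M : Type*} [AddCommMonoid M] (F : Sym2 V → Sym2 V → M) :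
    ∑ v : V, ∑ u ∈ G.neighborFinset v, ∑ w ∈ (G.neighborFinset v).erase u, F s(v, u) s(v, w)
    = ∑ e ∈ G.edgeFinset, ∑ f ∈ (G.edgeFinset.erase e).filter (fun f => ¬ ∀ x ∈ e, x ∉ f),
        F e f := by
  classical
  have LHS : ∑ v : V, ∑ u ∈ G.neighborFinset v, ∑ w ∈ (G.neighborFinset v).erase u,
        F s(v, u) s(v, w)
      = ∑ p ∈ (Finset.univ.sigma fun v : V =>
          (G.neighborFinset v).sigma fun u => (G.neighborFinset v).erase u),
          F s(p.1, p.2.1) s(p.1, p.2.2) := by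
    rw [Finset.sum_sigma]
    exact Finset.sum_congr rfl fun v _ => by rw [Finset.sum_sigma]
  have RHS : ∑ e ∈ G.edgeFinset,
        ∑ f ∈ (G.edgeFinset.erase e).filter (fun f => ¬ ∀ x ∈ e, x ∉ f), F e f
      = ∑ q ∈ (G.edgeFinset.sigma fun e =>
          (G.edgeFinset.erase e).filter (fun f => ¬ ∀ x ∈ e, x ∉ f)), F q.1 q.2 := by
    rw [Finset.sum_sigma]
  rw [LHS, RHS]
  refine Finset.sum_bij
    (fun (p : Σ _ : V, Σ _ : V, V) _ => (⟨s(p.1, p.2.1), s(p.1, p.2.2)⟩ : Σ _ : Sym2 V, Sym2 V))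
    ?_ ?_ ?_ ?_
  · rintro ⟨v, u, w⟩ hp
    simp only [Finset.mem_sigma, Finset.mem_univ, true_and, SimpleGraph.mem_neighborFinset,
      Finset.mem_erase] at hp
    obtain ⟨hu, hwu, hw⟩ := hp
    simp only [Finset.mem_sigma, Finset.mem_filter, Finset.mem_erase, SimpleGraph.mem_edgeFinset,
      SimpleGraph.mem_edgeSet, not_forall]
    refine ⟨hu, ⟨?_, hw⟩, ⟨v, by simp, by simp⟩⟩
    intro hq
    obtain ⟨-, h4⟩ | ⟨h3, h4⟩ := Sym2.eq_iff.1 hq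
    · exact hwu h4
    · exact G.ne_of_adj hu (h3 ▸ h4 ▸ rfl)
  · rintro ⟨v, u, w⟩ hp ⟨v', u', w'⟩ hp' heq
    simp only [Finset.mem_sigma, Finset.mem_univ, true_and, SimpleGraph.mem_neighborFinset,
      Finset.mem_erase] at hp hp'
    obtain ⟨hu, hwu, hw⟩ := hp
    obtain ⟨hu', hwu', hw'⟩ := hp'
    have h1 : s(v, u) = s(v', u') := congrArg Sigma.fst heq
    have h2 : s(v, w) = s(v', w') := congrArg Sigma.snd heq
    obtain ⟨hv1, hu1⟩ | ⟨hv1, hu1⟩ := Sym2.eq_iff.1 h1 <;>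
      obtain ⟨hv2, hw2⟩ | ⟨hv2, hw2⟩ := Sym2.eq_iff.1 h2
    · subst hv1; subst hu1; subst hw2; rfl
    · exact absurd (hw2.trans hv1.symm) (G.ne_of_adj hw).symm
    · exact absurd (hv1.symm.trans hv2).symm (G.ne_of_adj hu')
    · exact absurd (hw2.trans hu1.symm) hwu
  · rintro ⟨e, f⟩ hq
    simp only [Finset.mem_sigma, Finset.mem_filter, Finset.mem_erase, SimpleGraph.mem_edgeFinset,
      not_forall] at hq
    obtain ⟨he, ⟨hfe, hf⟩, x, hxe, hxf⟩ := hq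
    rw [not_not] at hxf
    have hue : s(x, Sym2.Mem.other' hxe) = e := Sym2.other_spec' hxe
    have hwf : s(x, Sym2.Mem.other' hxf) = f := Sym2.other_spec' hxf
    have hadj_u : G.Adj x (Sym2.Mem.other' hxe) := by
      rw [← SimpleGraph.mem_edgeSet, hue]; exact he
    have hadj_w : G.Adj x (Sym2.Mem.other' hxf) := by
      rw [← SimpleGraph.mem_edgeSet, hwf]; exact hf
    refine ⟨⟨x, Sym2.Mem.other' hxe, Sym2.Mem.other' hxf⟩, ?_, ?_⟩
    · simp only [Finset.mem_sigma, Finset.mem_univ, true_and, SimpleGraph.mem_neighborFinset,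
        Finset.mem_erase]
      refine ⟨hadj_u, fun hww => hfe ?_, hadj_w⟩
      rw [← hwf, hww, hue]
    · show (⟨s(x, Sym2.Mem.other' hxe), s(x, Sym2.Mem.other' hxf)⟩ : Σ _ : Sym2 V, Sym2 V)
        = ⟨e, f⟩
      rw [hue, hwf]
  · rintro ⟨v, u, w⟩ hp
    rfl

end KnabeAux

theorem stmt2 {V : Type} [Fintype V] [DecidableEq V]
    (G : SimpleGraph V) [DecidableRel G.Adj] (hconn : G.Connected)
    {N : ℕ} (h : Sym2 V → Matrix (Fin N) (Fin N) ℂ)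
    (hproj : ∀ e ∈ G.edgeFinset, (h e).IsHermitian ∧ h e * h e = h e)
    (hcomm : ∀ e ∈ G.edgeFinset, ∀ f ∈ G.edgeFinset,
      (∀ v : V, v ∈ e → v ∉ f) → Commute (h e) (h f))
    (Δ : V → ℝ) (hΔ : ∀ v, 0 ≤ Δ v)
    (hsub : ∀ v : V,
      ((∑ u ∈ G.neighborFinset v, h s(v, u)) * (∑ u ∈ G.neighborFinset v, h s(v, u))
        - ((Δ v : ℂ)) • (∑ u ∈ G.neighborFinset v, h s(v, u))).PosSemidef)
    (hHerm : (∑ e ∈ G.edgeFinset, h e).IsHermitian) :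
    ((∑ e ∈ G.edgeFinset, h e) * (∑ e ∈ G.edgeFinset, h e)
      - (((2 * ((⨅ v : V, Δ v) - 1/2) : ℝ) : ℂ)) • (∑ e ∈ G.edgeFinset, h e)).PosSemidef
    ∧ ∀ i, hHerm.eigenvalues i ≠ 0 →
        2 * ((⨅ v : V, Δ v) - 1/2) ≤ hHerm.eigenvalues i := by
  classical
  set m : ℝ := ⨅ v : V, Δ v with hm_def
  set H : Matrix (Fin N) (Fin N) ℂ := ∑ e ∈ G.edgeFinset, h e with hH_def
  set B : V → Matrix (Fin N) (Fin N) ℂ :=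
    fun v => ∑ u ∈ G.neighborFinset v, h s(v, u) with hB_def
  have hEproj : ∀ e ∈ G.edgeFinset, h e * h e = h e := fun e he => (hproj e he).2
  have hEpsd : ∀ e ∈ G.edgeFinset, (h e).PosSemidef :=
    fun e he => knabe_psd_of_proj (hproj e he).1 (hproj e he).2
  have hedge : ∀ {v u : V}, G.Adj v u → s(v, u) ∈ G.edgeFinset := fun hvu => by simpa using hvu
  have hBpsd : ∀ v, (B v).PosSemidef := fun v =>
    knabe_sum_psd _ _ (fun u hu => hEpsd _ (hedge (by simpa using hu)))
  have hm_le : ∀ v, m ≤ Δ v := fun v =>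
    ciInf_le ⟨0, by rintro x ⟨v', rfl⟩; exact hΔ v'⟩ v
  -- the disjoint-pair part
  set D : Matrix (Fin N) (Fin N) ℂ := ∑ e ∈ G.edgeFinset,
    ∑ f ∈ (G.edgeFinset.erase e).filter (fun f => ∀ x ∈ e, x ∉ f), h e * h f with hD_def
  set Q : Matrix (Fin N) (Fin N) ℂ := ∑ e ∈ G.edgeFinset,
    ∑ f ∈ (G.edgeFinset.erase e).filter (fun f => ¬ ∀ x ∈ e, x ∉ f), h e * h f with hQ_def
  have hH2 : H * H = H + (D + Q) := by
    rw [hH_def, Finset.sum_mul_sum]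
    have hsplit : ∀ e ∈ G.edgeFinset, ∑ f ∈ G.edgeFinset, h e * h f
        = h e + (∑ f ∈ (G.edgeFinset.erase e).filter (fun f => ∀ x ∈ e, x ∉ f), h e * h f
          + ∑ f ∈ (G.edgeFinset.erase e).filter (fun f => ¬ ∀ x ∈ e, x ∉ f), h e * h f) := by
      intro e he
      rw [Finset.sum_filter_add_sum_filter_not (G.edgeFinset.erase e) (fun f => ∀ x ∈ e, x ∉ f),
        ← Finset.add_sum_erase _ _ he, hEproj e he]
    rw [Finset.sum_congr rfl hsplit, Finset.sum_add_distrib, Finset.sum_add_distrib]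
  have hBB : ∑ v : V, B v * B v = (H + H) + Q := by
    have hsplit : ∀ v : V, B v * B v
        = ∑ u ∈ G.neighborFinset v, (h s(v, u)
          + ∑ w ∈ (G.neighborFinset v).erase u, h s(v, u) * h s(v, w)) := by
      intro v
      rw [hB_def, Finset.sum_mul_sum]
      refine Finset.sum_congr rfl fun u hu => ?_
      rw [← Finset.add_sum_erase _ _ hu, hEproj _ (hedge (by simpa using hu))]
    calc ∑ v : V, B v * B v
        = ∑ v : V, ∑ u ∈ G.neighborFinset v, (h s(v, u)
            + ∑ w ∈ (G.neighborFinset v).erase u, h s(v, u) * h s(v, w)) :=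
          Finset.sum_congr rfl fun v _ => hsplit v
      _ = (∑ v : V, ∑ u ∈ G.neighborFinset v, h s(v, u))
            + ∑ v : V, ∑ u ∈ G.neighborFinset v,
              ∑ w ∈ (G.neighborFinset v).erase u, h s(v, u) * h s(v, w) := by
          rw [← Finset.sum_add_distrib]
          exact Finset.sum_congr rfl fun v _ => Finset.sum_add_distrib
      _ = (H + H) + Q := by
          rw [knabe_pair_sum G h, knabe_triple_sum G (fun e f => h e * h f),
            Finset.sum_add_distrib, hQ_def, hH_def]
  have hBsum : ∑ v : V, B v = H + H := by
    rw [hB_def, knabe_pair_sum G h, Finset.sum_add_distrib, hH_def]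
  have hc : (((2 * (m - 1/2) : ℝ)) : ℂ) = 2 * (m : ℂ) - 1 := by push_cast; ring
  have key : H * H - (((2 * (m - 1/2) : ℝ)) : ℂ) • H
      = (∑ v : V, (B v * B v - (m : ℂ) • B v)) + D := by
    rw [Finset.sum_sub_distrib, ← Finset.smul_sum, hBsum, hBB, hH2, hc]
    module
  have Tpsd : (H * H - (((2 * (m - 1/2) : ℝ)) : ℂ) • H).PosSemidef := by
    rw [key]
    refine Matrix.PosSemidef.add (knabe_sum_psd _ _ fun v _ => ?_) ?_
    · have hrw : B v * B v - (m : ℂ) • B v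
          = (B v * B v - ((Δ v : ℂ)) • B v) + (((Δ v - m : ℝ)) : ℂ) • B v := by
        push_cast
        module
      rw [hrw]
      exact (hsub v).add (knabe_smul_psd (hBpsd v) (sub_nonneg.2 (hm_le v)))
    · refine knabe_sum_psd _ _ fun e he => knabe_sum_psd _ _ fun f hf => ?_
      simp only [Finset.mem_filter, Finset.mem_erase] at hf
      obtain ⟨⟨hfe, hfE⟩, hdisj⟩ := hf
      have hcom : h e * h f = h f * h e := (hcomm e he f hfE hdisj).eq
      refine knabe_psd_of_proj ?_ ?_
      · unfold Matrix.IsHermitian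
        rw [conjTranspose_mul, (hproj f hfE).1, (hproj e he).1, ← hcom]
      · calc h e * h f * (h e * h f) = h e * (h f * h e) * h f := by
              rw [mul_assoc, mul_assoc, mul_assoc]
          _ = h e * (h e * h f) * h f := by rw [hcom]
          _ = (h e * h e) * (h f * h f) := by
              rw [mul_assoc, mul_assoc, mul_assoc]
          _ = h e * h f := by rw [hEproj e he, hEproj f hfE]
  refine ⟨Tpsd, fun i hi => ?_⟩
  have Hpsd : H.PosSemidef := knabe_sum_psd _ _ hEpsd
  have hnn : 0 ≤ hHerm.eigenvalues i := Hpsd.eigenvalues_nonneg i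
  have hpos : 0 < hHerm.eigenvalues i := lt_of_le_of_ne hnn (Ne.symm hi)
  set lam : ℝ := hHerm.eigenvalues i with hlam
  set x : Fin N → ℂ := ⇑(hHerm.eigenvectorBasis i) with hx_def
  have hx : H *ᵥ x = lam • x := hHerm.mulVec_eigenvectorBasis i
  have hxx : star x ⬝ᵥ x = 1 := by
    have h1 : (inner ℂ (hHerm.eigenvectorBasis i) (hHerm.eigenvectorBasis i) : ℂ)
        = star x ⬝ᵥ x :=
          (EuclideanSpace.inner_eq_star_dotProduct _ _).trans (dotProduct_comm _ _)
    rw [← h1, inner_self_eq_norm_sq_to_K, hHerm.eigenvectorBasis.orthonormal.1 i]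
    norm_num
  have h0 := Tpsd.dotProduct_mulVec_nonneg x
  simp only [sub_mulVec, ← mulVec_mulVec, hx, mulVec_smul, smul_mulVec,
    dotProduct_sub, dotProduct_smul, hxx] at h0
  have h0' : (0 : ℂ) ≤ (((lam * lam - 2 * (m - 1/2) * lam : ℝ)) : ℂ) := by
    convert h0 using 1
    push_cast [Complex.real_smul, smul_eq_mul]
    ring
  rw [Complex.zero_le_real] at h0'
  nlinarith [hpos, h0']
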